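/- Let H be a complex inner product space and let q, c⁺, c⁻ : H → H be linear maps such that q is self-adjoint (q = q*), c⁺ + c⁻ = id, and (c⁻)* ∘ q ∘ c⁺ = 0. Then q ∘ c⁺ = (c⁺)* ∘ q, and likewise q ∘ c⁻ = (c⁻)* ∘ q. -/
import Mathlib


/-- If `q = q*`, `c⁺ + c⁻ = id` and `(c⁻)* q c⁺ = 0`, then `q c^± = (c^±)* q`
(q-self-adjointness of the Calderón projectors). -/
theorem stmt12 (H : Type*) [NormedAddCommGroup H] [InnerProductSpace ℂ H]
    [FiniteDimensional ℂ H]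
    (q cp cm : H →ₗ[ℂ] H) (hq : LinearMap.adjoint q = q)
    (hsum : cp + cm = LinearMap.id)
    (horth : LinearMap.adjoint cm ∘ₗ q ∘ₗ cp = 0) :
    q ∘ₗ cp = LinearMap.adjoint cp ∘ₗ q ∧ q ∘ₗ cm = LinearMap.adjoint cm ∘ₗ q := by
  have hid : LinearMap.adjoint (LinearMap.id : H →ₗ[ℂ] H) = LinearMap.id := by
    rw [← Module.End.one_eq_id, ← LinearMap.star_eq_adjoint, star_one]
  have hsumadj : LinearMap.adjoint cp + LinearMap.adjoint cm = LinearMap.id := by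
    rw [← map_add, hsum, hid]
  have h1 : q ∘ₗ cp = LinearMap.adjoint cp ∘ₗ q ∘ₗ cp := by
    calc q ∘ₗ cp = LinearMap.id ∘ₗ (q ∘ₗ cp) := by rw [LinearMap.id_comp]
    _ = (LinearMap.adjoint cp + LinearMap.adjoint cm) ∘ₗ (q ∘ₗ cp) := by rw [hsumadj]
    _ = LinearMap.adjoint cp ∘ₗ q ∘ₗ cp + LinearMap.adjoint cm ∘ₗ q ∘ₗ cp := by
        rw [LinearMap.add_comp]
    _ = LinearMap.adjoint cp ∘ₗ q ∘ₗ cp := by rw [horth, add_zero]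
  have hsa : LinearMap.adjoint (q ∘ₗ cp) = q ∘ₗ cp := by
    rw [h1, LinearMap.adjoint_comp, LinearMap.adjoint_comp, LinearMap.adjoint_adjoint, hq,
      LinearMap.comp_assoc]
  have hp : q ∘ₗ cp = LinearMap.adjoint cp ∘ₗ q := by
    rw [← hsa, LinearMap.adjoint_comp, hq]
  refine ⟨hp, ?_⟩
  have hcm : cm = LinearMap.id - cp := by rw [← hsum]; abel
  have hcma : LinearMap.adjoint cm = LinearMap.id - LinearMap.adjoint cp := by
    rw [hcm, map_sub, hid]
  rw [hcm, map_sub, hid, LinearMap.comp_sub, LinearMap.sub_comp, LinearMap.comp_id,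
    LinearMap.id_comp, hp]
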